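/- Let 0 ≤ p < q, a ∈ ℝ^q, and i ∈ [q] with a_i ≠ 0. In the Koszul matrix A(a) (rows indexed by p-subsets S of [q], columns indexed by (p+1)-subsets U, entries A_{S,U} = σ(U,j)·a_j when U = S ∪ {j}, else 0), the columns indexed by {U : i ∈ U} form a basis of the column span of A(a), and the rows indexed by {S : i ∉ S} form a basis of the row span of A(a). -/

import Mathlib

def koszulSign {q : ℕ} (U : Finset (Fin q)) (i : Fin q) : ℝ :=
  (-1) ^ (U.filter (fun m => m < i)).card

def koszul (q p : ℕ) (a : Fin q → ℝ) :
    Matrix {S : Finset (Fin q) // S.card = p} {U : Finset (Fin q) // U.card = p + 1} ℝ :=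
  fun S U => ∑ i : Fin q,
    if (U : Finset (Fin q)) = insert i (S : Finset (Fin q)) ∧ i ∉ (S : Finset (Fin q))
    then koszulSign (U : Finset (Fin q)) i * a i else 0

lemma koszul_eval {q p : ℕ} {a : Fin q → ℝ} (S : {S : Finset (Fin q) // S.card = p})
    (U : {U : Finset (Fin q) // U.card = p + 1}) (j : Fin q) (hj : j ∉ S.1)
    (hU : U.1 = insert j S.1) : koszul q p a S U = koszulSign U.1 j * a j := by
  unfold koszul
  rw [Fintype.sum_eq_single j, if_pos ⟨hU, hj⟩]
  intro j' hj'
  rw [if_neg]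
  rintro ⟨h1, h2⟩
  apply hj'
  have : j' ∈ insert j S.1 := by rw [← hU, h1]; exact Finset.mem_insert_self j' S.1
  rcases Finset.mem_insert.1 this with h | h
  · exact h
  · exact absurd h h2

lemma koszul_zero {q p : ℕ} {a : Fin q → ℝ} (S : {S : Finset (Fin q) // S.card = p})
    (U : {U : Finset (Fin q) // U.card = p + 1})
    (h : ∀ j, ¬(U.1 = insert j S.1 ∧ j ∉ S.1)) : koszul q p a S U = 0 :=
  Finset.sum_eq_zero fun j _ => if_neg (h j)
lemma koszulSign_ne_zero {q : ℕ} (U : Finset (Fin q)) (i : Fin q) : koszulSign U i ≠ 0 :=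
  pow_ne_zero _ (by norm_num)

lemma koszulSign_sq {q : ℕ} (U : Finset (Fin q)) (i : Fin q) :
    koszulSign U i * koszulSign U i = 1 := by
  unfold koszulSign
  rw [← pow_add]
  exact Even.neg_one_pow ⟨_, rfl⟩

lemma koszulSign_insert {q : ℕ} (S : Finset (Fin q)) (j k : Fin q) (hj : j ∉ S) :
    koszulSign (insert j S) k = (if j < k then (-1:ℝ) else 1) * koszulSign S k := by
  unfold koszulSign
  rw [Finset.filter_insert]
  split_ifs with h
  · rw [Finset.card_insert_of_notMem (fun hm => hj (Finset.mem_of_mem_filter _ hm)),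
      pow_succ]
    ring
  · rw [one_mul]

lemma koszulSign_insert_self {q : ℕ} (S : Finset (Fin q)) (j : Fin q) (hj : j ∉ S) :
    koszulSign (insert j S) j = koszulSign S j := by
  rw [koszulSign_insert S j j hj, if_neg (lt_irrefl j), one_mul]

lemma koszulSign_antisym {q : ℕ} (S : Finset (Fin q)) (j k : Fin q) (hjk : j ≠ k)
    (hj : j ∉ S) (hk : k ∉ S) :
    koszulSign (insert j S) j * koszulSign (insert k (insert j S)) k
      = -(koszulSign (insert k S) k * koszulSign (insert j (insert k S)) j) := by
  have hkj : k ∉ insert j S := by simp [Finset.mem_insert, hk, hjk.symm]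
  have hjk' : j ∉ insert k S := by simp [Finset.mem_insert, hj, hjk]
  rw [koszulSign_insert_self _ _ hkj, koszulSign_insert_self _ _ hjk',
    koszulSign_insert_self _ _ hj, koszulSign_insert_self _ _ hk,
    koszulSign_insert S j k hj, koszulSign_insert S k j hk]
  rcases lt_or_gt_of_ne hjk with h | h
  · rw [if_pos h, if_neg (not_lt.2 h.le)]; ring
  · rw [if_neg (not_lt.2 h.le), if_pos h]; ring

lemma koszul_dd (q p : ℕ) (a : Fin q → ℝ) (S : {S : Finset (Fin q) // S.card = p})
    (W : {W : Finset (Fin q) // W.card = p + 2}) :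
    ∑ V : {V : Finset (Fin q) // V.card = p + 1},
      koszul q p a S V * koszul q (p+1) a V W = 0 := by
  classical
  set T : Fin q → Fin q → ℝ := fun j k =>
    if j ∉ S.1 ∧ k ∉ insert j S.1 ∧ W.1 = insert k (insert j S.1) then
      (koszulSign (insert j S.1) j * a j) * (koszulSign W.1 k * a k) else 0 with hT
  have claimA : ∑ V : {V : Finset (Fin q) // V.card = p + 1},
      koszul q p a S V * koszul q (p+1) a V W = ∑ j : Fin q, ∑ k : Fin q, T j k := by
    unfold koszul
    simp_rw [Finset.sum_mul_sum]
    rw [Finset.sum_comm]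
    refine Finset.sum_congr rfl fun j _ => ?_
    rw [Finset.sum_comm]
    refine Finset.sum_congr rfl fun k _ => ?_
    by_cases hj : j ∉ S.1
    · have hcard : (insert j S.1).card = p + 1 := by
        rw [Finset.card_insert_of_notMem hj, S.2]
      rw [Fintype.sum_eq_single (⟨insert j S.1, hcard⟩ :
          {V : Finset (Fin q) // V.card = p + 1})]
      · rw [if_pos ⟨rfl, hj⟩]; simp only [hT]
        by_cases hk : W.1 = insert k (insert j S.1) ∧ k ∉ insert j S.1
        · rw [if_pos hk, if_pos ⟨hj, hk.2, hk.1⟩]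
        · rw [if_neg hk, mul_zero, if_neg (fun h => hk ⟨h.2.2, h.2.1⟩)]
      · intro V hV
        rw [if_neg, zero_mul]
        rintro ⟨h1, -⟩
        exact hV (Subtype.ext h1)
    · push_neg at hj
      rw [Finset.sum_eq_zero, hT]
      · simp [hj]
      · intro V _
        rw [if_neg, zero_mul]
        rintro ⟨-, h2⟩
        exact h2 hj
  have claimB : ∀ j k, T j k = -T k j := by
    intro j k
    by_cases hjk : j = k
    · subst hjk
      simp [hT, Finset.mem_insert_self]
    · by_cases hc : j ∉ S.1 ∧ k ∉ insert j S.1 ∧ W.1 = insert k (insert j S.1)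
      · obtain ⟨hj, hk', hW⟩ := hc
        have hk : k ∉ S.1 := fun h => hk' (Finset.mem_insert_of_mem h)
        have hj' : j ∉ insert k S.1 := by simp [Finset.mem_insert, hj, hjk]
        have hc2 : k ∉ S.1 ∧ j ∉ insert k S.1 ∧ W.1 = insert j (insert k S.1) := by
          exact ⟨hk, hj', by rw [hW, Finset.insert_comm]⟩
        have := koszulSign_antisym S.1 j k hjk hj hk
        have h2 : koszulSign (insert k (insert j S.1)) j
            = koszulSign (insert j (insert k S.1)) j := by
          rw [Finset.insert_comm]
        simp only [hT]
        rw [if_pos ⟨hj, hk', hW⟩, if_pos hc2, hW, h2]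
        linear_combination (a j * a k) * this
      · have hc2 : ¬(k ∉ S.1 ∧ j ∉ insert k S.1 ∧ W.1 = insert j (insert k S.1)) := by
          rintro ⟨hk, hj', hW⟩
          exact hc ⟨fun h => hj' (Finset.mem_insert_of_mem h),
            by simp [Finset.mem_insert, hk, Ne.symm hjk],
            by rw [hW, Finset.insert_comm]⟩
        simp only [hT]
        rw [if_neg hc, if_neg hc2, neg_zero]
  rw [claimA]
  have h1 : ∑ j : Fin q, ∑ k : Fin q, T j k = ∑ j : Fin q, ∑ k : Fin q, T k j :=
    Finset.sum_comm
  have h2 : ∑ j : Fin q, ∑ k : Fin q, T k j = -∑ j : Fin q, ∑ k : Fin q, T j k := by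
    rw [← Finset.sum_neg_distrib]
    exact Finset.sum_congr rfl fun j _ => by
      rw [← Finset.sum_neg_distrib]
      exact Finset.sum_congr rfl fun k _ => by rw [← claimB]
  linarith [h1, h2]

lemma koszul_col_mem (q p : ℕ) (a : Fin q → ℝ) (i : Fin q) (hai : a i ≠ 0)
    (U : {U : Finset (Fin q) // U.card = p + 1}) :
    (fun S => koszul q p a S U) ∈ Submodule.span ℝ (Set.range
      (fun U' : {U' : {U' : Finset (Fin q) // U'.card = p + 1} // i ∈ U'.1.1} =>
        (fun S => koszul q p a S U'.1))) := by
  classical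
  by_cases hiU : i ∈ U.1
  · exact Submodule.subset_span ⟨⟨U, hiU⟩, rfl⟩
  set W : Finset (Fin q) := insert i U.1 with hWdef
  have hW : W.card = p + 2 := by
    rw [hWdef, Finset.card_insert_of_notMem hiU, U.2]
  set Vk : Fin q → {V : Finset (Fin q) // V.card = p + 1} := fun k =>
    if h : k ∈ W then ⟨W.erase k, by simp [Finset.card_erase_of_mem h, hW]⟩ else U with hVk
  have hiW : i ∈ W := by rw [hWdef]; exact Finset.mem_insert_self _ _
  -- Step 1: collapse the dd sum
  have step1 : ∀ S : {S : Finset (Fin q) // S.card = p},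
      ∑ k ∈ W, koszul q p a S (Vk k) * (koszulSign W k * a k) = 0 := by
    intro S
    have := koszul_dd q p a S ⟨W, hW⟩
    rw [← this]
    have expand : ∀ V : {V : Finset (Fin q) // V.card = p + 1},
        koszul q p a S V * koszul q (p+1) a V ⟨W, hW⟩
          = ∑ k : Fin q, koszul q p a S V *
              (if W = insert k V.1 ∧ k ∉ V.1 then koszulSign W k * a k else 0) := by
      intro V
      rw [show koszul q (p+1) a V ⟨W, hW⟩ = ∑ k : Fin q,
          (if W = insert k V.1 ∧ k ∉ V.1 then koszulSign W k * a k else 0) from rfl,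
        Finset.mul_sum]
    simp_rw [expand]
    rw [Finset.sum_comm]
    rw [← Finset.sum_subset (Finset.subset_univ W) (fun k _ hk => ?_)]
    · refine Finset.sum_congr rfl fun k hk => ?_
      rw [Fintype.sum_eq_single (Vk k)]
      · congr 1
        rw [if_pos]
        constructor
        · rw [hVk]; simp only [dif_pos hk]
          rw [Finset.insert_erase hk]
        · rw [hVk]; simp only [dif_pos hk]
          exact Finset.notMem_erase k W
      · intro V hV
        rw [if_neg, mul_zero]
        rintro ⟨h1, h2⟩
        apply hV
        apply Subtype.ext
        rw [hVk]; simp only [dif_pos hk]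
        rw [h1, Finset.erase_insert h2]
    · apply Finset.sum_eq_zero
      intro V _
      rw [if_neg, mul_zero]
      rintro ⟨h1, -⟩
      exact hk (h1 ▸ Finset.mem_insert_self k V.1)
  -- extract the i term
  have hVki : Vk i = U := by
    rw [hVk]
    simp only [dif_pos hiW]
    apply Subtype.ext
    show W.erase i = U.1
    rw [hWdef]
    exact Finset.erase_insert hiU
  have key : ∀ S : {S : Finset (Fin q) // S.card = p},
      koszul q p a S U * (koszulSign W i * a i)
        + ∑ k ∈ U.1, koszul q p a S (Vk k) * (koszulSign W k * a k) = 0 := by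
    intro S
    have := step1 S
    rw [hWdef, Finset.sum_insert hiU, ← hWdef, hVki] at this
    exact this
  have hb : koszulSign W i * a i ≠ 0 := mul_ne_zero (koszulSign_ne_zero W i) hai
  have eqn : (fun S => koszul q p a S U) = ∑ k ∈ U.1.attach,
      ((-1 / (koszulSign W i * a i)) * (koszulSign W k.1 * a k.1))
        • (fun S => koszul q p a S (Vk k.1)) := by
    funext S
    rw [Finset.sum_apply]
    simp only [Pi.smul_apply, smul_eq_mul]
    have h1 : ∑ k ∈ U.1.attach,
        (-1 / (koszulSign W i * a i)) * (koszulSign W k.1 * a k.1) * koszul q p a S (Vk k.1)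
        = (-1 / (koszulSign W i * a i)) *
            ∑ k ∈ U.1, koszul q p a S (Vk k) * (koszulSign W k * a k) := by
      rw [Finset.mul_sum, ← Finset.sum_attach U.1
        (fun k => -1 / (koszulSign W i * a i) * (koszul q p a S (Vk k) * (koszulSign W k * a k)))]
      exact Finset.sum_congr rfl fun k _ => by ring
    rw [h1]
    have h2 : ∑ k ∈ U.1, koszul q p a S (Vk k) * (koszulSign W k * a k)
        = -(koszul q p a S U * (koszulSign W i * a i)) := by linarith [key S]
    rw [h2]
    field_simp
    rw [mul_div_assoc, div_self (koszulSign_ne_zero _ _), mul_one]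
  rw [eqn]
  apply Submodule.sum_mem
  intro k _
  apply Submodule.smul_mem
  apply Submodule.subset_span
  have hkW : k.1 ∈ W := Finset.mem_insert_of_mem k.2
  have hik : i ∈ (Vk k.1).1 := by
    rw [hVk]
    simp only [dif_pos hkW]
    exact Finset.mem_erase.2 ⟨fun h => hiU (h ▸ k.2), hiW⟩
  exact ⟨⟨Vk k.1, hik⟩, rfl⟩

lemma koszul_row_mem (q p : ℕ) (a : Fin q → ℝ) (i : Fin q) (hai : a i ≠ 0) :
    ∀ S : {S : Finset (Fin q) // S.card = p},
      koszul q p a S ∈ Submodule.span ℝ (Set.range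
        (fun S' : {S' : {S' : Finset (Fin q) // S'.card = p} // i ∉ S'.1.1} =>
          koszul q p a S'.1)) := by
  classical
  intro S
  by_cases hiS : i ∈ S.1
  case neg => exact Submodule.subset_span ⟨⟨S, hiS⟩, rfl⟩
  -- here p ≥ 1
  have hp : p ≠ 0 := by
    have h1 : 0 < S.1.card := Finset.card_pos.2 ⟨i, hiS⟩
    have h2 := S.2
    omega
  revert hiS
  revert S
  obtain ⟨r, rfl⟩ : ∃ r, p = r + 1 := ⟨p - 1, by omega⟩
  intro S hiS
  set S' : Finset (Fin q) := S.1.erase i with hS'def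
  have hS' : S'.card = r := by
    rw [hS'def, Finset.card_erase_of_mem hiS, S.2]
    rfl
  have hiS' : i ∉ S' := Finset.notMem_erase i S.1
  set Vj : Fin q → {V : Finset (Fin q) // V.card = r + 1} := fun j =>
    if h : j ∉ S' then ⟨insert j S', by rw [Finset.card_insert_of_notMem h, hS']⟩ else S
    with hVj
  have hVji : Vj i = S := by
    rw [hVj]
    simp only [dif_pos hiS']
    apply Subtype.ext
    show insert i S' = S.1
    rw [hS'def]
    exact Finset.insert_erase hiS
  -- collapse
  have step1 : ∀ U : {U : Finset (Fin q) // U.card = r + 1 + 1},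
      ∑ j ∈ S'ᶜ, (koszulSign (Vj j).1 j * a j) * koszul q (r+1) a (Vj j) U = 0 := by
    intro U
    have hdd := koszul_dd q r a ⟨S', hS'⟩ U
    rw [← hdd]
    have expand : ∀ V : {V : Finset (Fin q) // V.card = r + 1},
        koszul q r a ⟨S', hS'⟩ V * koszul q (r+1) a V U
          = ∑ j : Fin q, (if V.1 = insert j S' ∧ j ∉ S'
              then koszulSign V.1 j * a j else 0) * koszul q (r+1) a V U := by
      intro V
      rw [show koszul q r a ⟨S', hS'⟩ V = ∑ j : Fin q,
          (if V.1 = insert j S' ∧ j ∉ S' then koszulSign V.1 j * a j else 0) from rfl,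
        Finset.sum_mul]
    simp_rw [expand]
    rw [Finset.sum_comm]
    rw [← Finset.sum_subset (Finset.subset_univ S'ᶜ) (fun j _ hj => ?_)]
    · refine Finset.sum_congr rfl fun j hj => ?_
      have hjS' : j ∉ S' := Finset.mem_compl.1 hj
      rw [Fintype.sum_eq_single (Vj j)]
      · congr 2
        · rw [if_pos]
          constructor
          · rw [hVj]; simp only [dif_pos hjS']
          · exact hjS'
      · intro V hV
        rw [if_neg, zero_mul]
        rintro ⟨h1, h2⟩
        apply hV
        apply Subtype.ext
        rw [hVj]; simp only [dif_pos h2]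
        exact h1
    · rw [Finset.mem_compl, not_not] at hj
      apply Finset.sum_eq_zero
      intro V _
      rw [if_neg, zero_mul]
      rintro ⟨-, h2⟩
      exact h2 hj
  have hiC : i ∈ S'ᶜ := Finset.mem_compl.2 hiS'
  have key : ∀ U : {U : Finset (Fin q) // U.card = r + 1 + 1},
      (koszulSign S.1 i * a i) * koszul q (r+1) a S U
        + ∑ j ∈ S'ᶜ.erase i, (koszulSign (Vj j).1 j * a j) * koszul q (r+1) a (Vj j) U
        = 0 := by
    intro U
    have h1 := step1 U
    rw [← Finset.add_sum_erase _ _ hiC, hVji] at h1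
    exact h1
  have hb : koszulSign S.1 i * a i ≠ 0 := mul_ne_zero (koszulSign_ne_zero _ i) hai
  have eqn : koszul q (r+1) a S = ∑ j ∈ (S'ᶜ.erase i).attach,
      ((-1 / (koszulSign S.1 i * a i)) * (koszulSign (Vj j.1).1 j.1 * a j.1))
        • koszul q (r+1) a (Vj j.1) := by
    funext U
    rw [Finset.sum_apply]
    simp only [Pi.smul_apply, smul_eq_mul]
    have h1 : ∑ j ∈ (S'ᶜ.erase i).attach,
        (-1 / (koszulSign S.1 i * a i)) * (koszulSign (Vj j.1).1 j.1 * a j.1)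
          * koszul q (r+1) a (Vj j.1) U
        = (-1 / (koszulSign S.1 i * a i)) *
            ∑ j ∈ S'ᶜ.erase i, (koszulSign (Vj j).1 j * a j) * koszul q (r+1) a (Vj j) U := by
      rw [Finset.mul_sum, ← Finset.sum_attach (S'ᶜ.erase i)
        (fun j => -1 / (koszulSign S.1 i * a i) *
          ((koszulSign (Vj j).1 j * a j) * koszul q (r+1) a (Vj j) U))]
      exact Finset.sum_congr rfl fun j _ => by ring
    rw [h1]
    have h2 : ∑ j ∈ S'ᶜ.erase i, (koszulSign (Vj j).1 j * a j) * koszul q (r+1) a (Vj j) U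
        = -((koszulSign S.1 i * a i) * koszul q (r+1) a S U) := by linarith [key U]
    rw [h2]
    field_simp
    rw [mul_div_assoc, div_self (koszulSign_ne_zero _ _), mul_one]
  rw [eqn]
  apply Submodule.sum_mem
  intro j _
  apply Submodule.smul_mem
  apply Submodule.subset_span
  have hj : j.1 ∈ S'ᶜ.erase i := j.2
  have hji : j.1 ≠ i := (Finset.mem_erase.1 hj).1
  have hjS' : j.1 ∉ S' := Finset.mem_compl.1 (Finset.mem_erase.1 hj).2
  have hiV : i ∉ (Vj j.1).1 := by
    rw [hVj]
    simp only [dif_pos hjS']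
    rw [Finset.mem_insert]
    push_neg
    exact ⟨Ne.symm hji, hiS'⟩
  exact ⟨⟨Vj j.1, hiV⟩, rfl⟩


theorem stmt2 (q p : ℕ) (hpq : p < q) (a : Fin q → ℝ) (i : Fin q) (hai : a i ≠ 0) :
    -- the columns {U : i ∈ U} form a basis of the column span
    (LinearIndependent ℝ
        (fun U : {U : {U : Finset (Fin q) // U.card = p + 1} // i ∈ U.1.1} =>
          (fun S => koszul q p a S U.1)) ∧
      Submodule.span ℝ (Set.range
          (fun U : {U : {U : Finset (Fin q) // U.card = p + 1} // i ∈ U.1.1} =>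
            (fun S => koszul q p a S U.1))) =
        Submodule.span ℝ (Set.range (fun U => fun S => koszul q p a S U))) ∧
    -- the rows {S : i ∉ S} form a basis of the row span
    (LinearIndependent ℝ
        (fun S : {S : {S : Finset (Fin q) // S.card = p} // i ∉ S.1.1} =>
          koszul q p a S.1) ∧
      Submodule.span ℝ (Set.range
          (fun S : {S : {S : Finset (Fin q) // S.card = p} // i ∉ S.1.1} =>
            koszul q p a S.1)) =
        Submodule.span ℝ (Set.range (koszul q p a))) := by
  classical
  refine ⟨⟨?_, ?_⟩, ?_, ?_⟩
  · -- column linear independence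
    rw [Fintype.linearIndependent_iff]
    intro g hg U₀
    have hS₀card : (U₀.1.1.erase i).card = p := by
      rw [Finset.card_erase_of_mem U₀.2, U₀.1.2]
      rfl
    set S₀ : {S : Finset (Fin q) // S.card = p} := ⟨U₀.1.1.erase i, hS₀card⟩
    have h0 := congrFun hg S₀
    rw [Finset.sum_apply] at h0
    simp only [Pi.smul_apply, smul_eq_mul, Pi.zero_apply] at h0
    rw [Fintype.sum_eq_single U₀] at h0
    · have hv : koszul q p a S₀ U₀.1 = koszulSign U₀.1.1 i * a i :=
        koszul_eval S₀ U₀.1 i (Finset.notMem_erase i _)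
          (by rw [Finset.insert_erase U₀.2])
      rw [hv] at h0
      rcases mul_eq_zero.1 h0 with h | h
      · exact h
      · exact absurd h (mul_ne_zero (koszulSign_ne_zero _ _) hai)
    · intro U hU
      have : koszul q p a S₀ U.1 = 0 := by
        apply koszul_zero
        rintro j ⟨h1, h2⟩
        have hij : j = i := by
          have hjU : j ∈ U.1.1 := h1 ▸ Finset.mem_insert_self j _
          by_contra hne
          have : i ∈ U₀.1.1.erase i := by
            have := U.2
            rw [h1] at this
            rcases Finset.mem_insert.1 this with h | h
            · exact absurd h.symm hne
            · exact h
          exact Finset.notMem_erase i _ this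
        subst hij
        have : U.1.1 = U₀.1.1 := by rw [h1, Finset.insert_erase U₀.2]
        exact hU (Subtype.ext (Subtype.ext this))
      rw [this, mul_zero]
  · -- column span
    apply le_antisymm
    · apply Submodule.span_mono
      rintro x ⟨U, rfl⟩
      exact ⟨U.1, rfl⟩
    · rw [Submodule.span_le]
      rintro x ⟨U, rfl⟩
      exact koszul_col_mem q p a i hai U
  · -- row linear independence
    rw [Fintype.linearIndependent_iff]
    intro g hg S₀
    have hU₀card : (insert i S₀.1.1).card = p + 1 := by
      rw [Finset.card_insert_of_notMem S₀.2, S₀.1.2]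
    set U₀ : {U : Finset (Fin q) // U.card = p + 1} := ⟨insert i S₀.1.1, hU₀card⟩
    have h0 := congrFun hg U₀
    rw [Finset.sum_apply] at h0
    simp only [Pi.smul_apply, smul_eq_mul, Pi.zero_apply] at h0
    rw [Fintype.sum_eq_single S₀] at h0
    · have hv : koszul q p a S₀.1 U₀ = koszulSign U₀.1 i * a i :=
        koszul_eval S₀.1 U₀ i S₀.2 rfl
      rw [hv] at h0
      rcases mul_eq_zero.1 h0 with h | h
      · exact h
      · exact absurd h (mul_ne_zero (koszulSign_ne_zero _ _) hai)
    · intro S hS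
      have : koszul q p a S.1 U₀ = 0 := by
        apply koszul_zero
        rintro j ⟨h1, h2⟩
        have hij : j = i := by
          by_contra hne
          have hiU : i ∈ insert j S.1.1 := by
            rw [← h1]; exact Finset.mem_insert_self i S₀.1.1
          rcases Finset.mem_insert.1 hiU with h | h
          · exact hne h.symm
          · exact S.2 h
        have h1' : insert i S₀.1.1 = insert i S.1.1 := by
          rw [hij] at h1; exact h1
        have h2' : i ∉ S.1.1 := hij ▸ h2
        have heq : S.1.1 = S₀.1.1 := by
          have h3 := congrArg (fun t => Finset.erase t i) h1'
          simp only [Finset.erase_insert S₀.2, Finset.erase_insert h2'] at h3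
          exact h3.symm
        exact hS (Subtype.ext (Subtype.ext heq))
      rw [this, mul_zero]
  · -- row span
    apply le_antisymm
    · apply Submodule.span_mono
      rintro x ⟨S, rfl⟩
      exact ⟨S.1, rfl⟩
    · rw [Submodule.span_le]
      rintro x ⟨S, rfl⟩
      exact koszul_row_mem q p a i hai S
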